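/- Let G ⋉ X be the transformation groupoid of a nonsingular action of a countable group G on a standard probability space (X, μ). If the groupoid G ⋉ X is not icc, then there exist a finite nonempty subset C ⊆ G \ {e}, its stabilizer H = {g ∈ G : gCg⁻¹ = C}, and a positive-measure H-invariant Borel set Y ⊆ X such that: the translates gY for g ∈ G/H partition X up to measure zero (assuming the action is ergodic), and every h ∈ C acts trivially on Y and has finite conjugacy class in H. -/

import Mathlib

open MeasureTheory ENNReal

structure DiscreteBorelGroupoid (G : Type*) [MeasurableSpace G] where
  s : G → G
  t : G → G
  mul : G → G → G
  inv : G → G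
  s_s : ∀ g, s (s g) = s g
  t_s : ∀ g, t (s g) = s g
  s_t : ∀ g, s (t g) = t g
  t_t : ∀ g, t (t g) = t g
  mul_s_self : ∀ g, mul g (s g) = g
  t_mul_self : ∀ g, mul (t g) g = g
  s_mul : ∀ {g h}, s g = t h → s (mul g h) = s h
  t_mul : ∀ {g h}, s g = t h → t (mul g h) = t g
  mul_assoc : ∀ {g h k}, s g = t h → s h = t k → mul (mul g h) k = mul g (mul h k)
  s_inv : ∀ g, s (inv g) = t g
  t_inv : ∀ g, t (inv g) = s g
  mul_inv_self : ∀ g, mul g (inv g) = t g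
  inv_mul_self : ∀ g, mul (inv g) g = s g
  measurable_s : Measurable s
  measurable_t : Measurable t
  measurable_inv : Measurable inv
  measurable_mul : Measurable (Function.uncurry mul)
  countable_s_fibers : ∀ x, {g | s g = x}.Countable
  countable_t_fibers : ∀ x, {g | t g = x}.Countable

namespace DiscreteBorelGroupoid

variable {G : Type*} [MeasurableSpace G] (Γ : DiscreteBorelGroupoid G)

def units : Set G := Set.range Γ.s

def IsBisection (A : Set G) : Prop := Set.InjOn Γ.s A ∧ Set.InjOn Γ.t A

def smul (A B : Set G) : Set G :=
  {x | ∃ g ∈ A, ∃ h ∈ B, Γ.s g = Γ.t h ∧ x = Γ.mul g h}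

def sinv (A : Set G) : Set G := Γ.inv '' A

def iso : Set G := {g | Γ.s g = Γ.t g}

def conj (g h : G) : G := Γ.mul (Γ.mul g h) (Γ.inv g)

def conjClass (A : Set G) : Set G :=
  {x | ∃ g, ∃ a ∈ A, Γ.s g = Γ.t a ∧ x = Γ.conj g a}

noncomputable def muS (μ : Measure G) (E : Set G) : ℝ≥0∞ :=
  ∫⁻ x, ((E ∩ {g | Γ.s g = x}).encard : ℝ≥0∞) ∂μ

noncomputable def muT (μ : Measure G) (E : Set G) : ℝ≥0∞ :=
  ∫⁻ x, ((E ∩ {g | Γ.t g = x}).encard : ℝ≥0∞) ∂μ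

def IsMeasuredGroupoid (μ : Measure G) : Prop :=
  IsProbabilityMeasure μ ∧ μ Γ.unitsᶜ = 0 ∧
    ∀ E : Set G, MeasurableSet E → (Γ.muS μ E = 0 ↔ Γ.muT μ E = 0)

def IsErgodic (μ : Measure G) : Prop :=
  ∀ E : Set G, MeasurableSet E → E ⊆ Γ.units →
    (∀ g, Γ.s g ∈ E ↔ Γ.t g ∈ E) → μ E = 0 ∨ μ E = 1

def IsIcc (μ : Measure G) : Prop :=
  ∀ A : Set G, A ⊆ Γ.iso → MeasurableSet A → Γ.muS μ A ≠ 0 →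
    Γ.muS μ (Γ.conjClass A) < ⊤ → Γ.muS μ (A \ Γ.units) = 0

end DiscreteBorelGroupoid
lemma encard_eq_tsum_aux {G : Type*} (S : Set G) :
    (S.encard : ℝ≥0∞) = ∑' g : G, S.indicator 1 g := by
  rw [← tsum_subtype]
  exact (ENNReal.tsum_set_one S).symm

lemma aux_encard_meas {G X : Type*} [Countable G] [MeasurableSpace G] [MeasurableSpace X]
    {E : Set (G × X)} (hE : MeasurableSet E) :
    Measurable fun y : X => (({g : G | (g, y) ∈ E}).encard : ℝ≥0∞) := by
  classical
  have h : ∀ y : X, (({g : G | (g, y) ∈ E}).encard : ℝ≥0∞)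
      = ∑' g : G, ((fun z : X => (g, z)) ⁻¹' E).indicator 1 y := by
    intro y
    rw [encard_eq_tsum_aux]
    refine tsum_congr fun g => ?_
    rw [Set.indicator_apply, Set.indicator_apply]
    rfl
  simp only [h]
  exact Measurable.ennreal_tsum fun g =>
    measurable_one.indicator (hE.preimage measurable_prodMk_left)

lemma muS_eq_aux {G X : Type*} [Group G] [Countable G]
    [MeasurableSpace G] [MeasurableSingletonClass G] [MeasurableSpace X]
    (Γ : DiscreteBorelGroupoid (G × X)) (hs : Γ.s = fun p => ((1 : G), p.2))
    (μ : Measure X) (E : Set (G × X)) (hE : MeasurableSet E) :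
    Γ.muS (μ.map fun x => ((1 : G), x)) E
      = ∫⁻ y, (({g : G | (g, y) ∈ E}).encard : ℝ≥0∞) ∂μ := by
  classical
  have hfib : ∀ p : G × X, (E ∩ {q | Γ.s q = p}).encard
      = if p.1 = 1 then ({g : G | (g, p.2) ∈ E}).encard else 0 := by
    intro p
    by_cases hp : p.1 = 1
    · rw [if_pos hp]
      have h1 : E ∩ {q | Γ.s q = p} = (fun g : G => (g, p.2)) '' {g : G | (g, p.2) ∈ E} := by
        ext q
        simp only [hs, Set.mem_inter_iff, Set.mem_setOf_eq, Set.mem_image]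
        constructor
        · rintro ⟨hqE, hq⟩
          have hq2 : p.2 = q.2 := (congrArg Prod.snd hq).symm
          refine ⟨q.1, ?_, ?_⟩
          · show (q.1, p.2) ∈ E
            rw [hq2]; exact hqE
          · rw [hq2]
        · rintro ⟨g, hg, rfl⟩
          exact ⟨hg, Prod.ext hp.symm rfl⟩
      rw [h1, Function.Injective.encard_image (fun a b h => congrArg Prod.fst h)]
    · rw [if_neg hp]
      have h1 : E ∩ {q | Γ.s q = p} = ∅ := by
        rw [Set.eq_empty_iff_forall_notMem]
        rintro q ⟨-, hq⟩
        rw [hs] at hq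
        exact hp (congrArg Prod.fst hq).symm
      rw [h1, Set.encard_empty]
  have hmeasN : Measurable fun y : X => (({g : G | (g, y) ∈ E}).encard : ℝ≥0∞) :=
    aux_encard_meas hE
  have hmeasF : Measurable fun p : G × X => ((E ∩ {q | Γ.s q = p}).encard : ℝ≥0∞) := by
    have heq : (fun p : G × X => ((E ∩ {q | Γ.s q = p}).encard : ℝ≥0∞))
        = fun p => if p.1 = 1 then (({g : G | (g, p.2) ∈ E}).encard : ℝ≥0∞) else 0 := by
      funext p
      rw [hfib p, apply_ite (fun e : ℕ∞ => (e : ℝ≥0∞))]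
      simp
    rw [heq]
    exact Measurable.ite (measurable_fst (measurableSet_singleton 1))
      (hmeasN.comp measurable_snd) measurable_const
  unfold DiscreteBorelGroupoid.muS
  rw [lintegral_map hmeasF measurable_prodMk_left]
  refine lintegral_congr fun y => ?_
  rw [hfib (1, y), if_pos rfl]
open DiscreteBorelGroupoid symmDiff in
theorem stmt_12 {G X : Type*} [Group G] [Countable G]
    [MeasurableSpace G] [MeasurableSingletonClass G]
    [MeasurableSpace X] [StandardBorelSpace X]
    [MulAction G X] (hmeas : ∀ g : G, Measurable (fun x : X => g • x))
    (μ : Measure X) [IsProbabilityMeasure μ]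
    (hns : ∀ g : G, Measure.QuasiMeasurePreserving (fun x : X => g • x) μ μ)
    (herg : ∀ E : Set X, MeasurableSet E → (∀ g : G, (fun x => g • x) ⁻¹' E = E) →
      μ E = 0 ∨ μ Eᶜ = 0)
    (Γ : DiscreteBorelGroupoid (G × X))
    (hs : Γ.s = fun p => ((1 : G), p.2))
    (ht : Γ.t = fun p => ((1 : G), p.1 • p.2))
    (hmul : Γ.mul = fun p q => (p.1 * q.1, q.2))
    (hinv : Γ.inv = fun p => (p.1⁻¹, p.1 • p.2))
    (hnoticc : ¬ Γ.IsIcc (μ.map fun x => ((1 : G), x))) :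
    ∃ C : Finset G, C.Nonempty ∧ (1 : G) ∉ C ∧
      ∃ Y : Set X, MeasurableSet Y ∧ μ Y ≠ 0 ∧
        (∀ h ∈ {g : G | (fun c => g * c * g⁻¹) '' (C : Set G) = (C : Set G)},
          μ (((fun x => h • x) '' Y) ∆ Y) = 0) ∧
        (∀ g₁ g₂ : G, μ (((fun x => g₁ • x) '' Y) ∩ ((fun x => g₂ • x) '' Y)) ≠ 0 →
          g₁⁻¹ * g₂ ∈ {g : G | (fun c => g * c * g⁻¹) '' (C : Set G) = (C : Set G)}) ∧
        μ (⋃ g : G, (fun x => g • x) '' Y)ᶜ = 0 ∧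
        (∀ h ∈ C,
          h ∈ {g : G | (fun c => g * c * g⁻¹) '' (C : Set G) = (C : Set G)} ∧
          μ {y ∈ Y | h • y ≠ y} = 0 ∧
          Set.Finite {k : G | ∃ g ∈ {g : G |
            (fun c => g * c * g⁻¹) '' (C : Set G) = (C : Set G)}, k = g * h * g⁻¹}) := by
  classical
  -- extract a witness of non-icc
  rw [DiscreteBorelGroupoid.IsIcc] at hnoticc
  push_neg at hnoticc
  obtain ⟨A, hAiso, hAmeas, -, hAfin, hB0⟩ := hnoticc
  -- the units
  have hunits : Γ.units = {p : G × X | p.1 = 1} := by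
    rw [DiscreteBorelGroupoid.units, hs]
    ext p
    constructor
    · rintro ⟨q, rfl⟩; rfl
    · intro hp; exact ⟨p, Prod.ext hp.symm rfl⟩
  set B : Set (G × X) := A \ Γ.units with hBdef
  have hBmeas : MeasurableSet B :=
    hAmeas.diff (by rw [hunits]; exact measurable_fst (measurableSet_singleton 1))
  have hBprop : ∀ p ∈ B, p.1 • p.2 = p.2 ∧ p.1 ≠ 1 := by
    rintro p ⟨hpA, hpu⟩
    have h1 := hAiso hpA
    rw [DiscreteBorelGroupoid.iso, Set.mem_setOf_eq, hs, ht] at h1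
    have h2 : p.2 = p.1 • p.2 := congrArg Prod.snd h1
    refine ⟨h2.symm, fun h => hpu ?_⟩
    rw [hunits]; exact h
  -- the conjugation-saturation of B
  set Ω : Set (G × X) := ⋃ k : G, (fun p : G × X => (k * p.1 * k⁻¹, k • p.2)) ⁻¹' B with hΩdef
  have hcmeas : ∀ k : G, Measurable (fun p : G × X => (k * p.1 * k⁻¹, k • p.2)) := by
    intro k
    refine Measurable.prodMk ?_ ?_
    · exact (measurable_of_countable (fun g : G => k * g * k⁻¹)).comp measurable_fst
    · exact (hmeas k).comp measurable_snd
  have hΩmeas : MeasurableSet Ω := MeasurableSet.iUnion fun k => hBmeas.preimage (hcmeas k)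
  have hBsub : B ⊆ Ω := fun p hp => Set.mem_iUnion.mpr ⟨1, by simpa using hp⟩
  have hΩprop : ∀ p ∈ Ω, p.1 • p.2 = p.2 ∧ p.1 ≠ 1 := by
    intro p hp
    obtain ⟨k, hk⟩ := Set.mem_iUnion.mp hp
    have hk' : (k * p.1 * k⁻¹, k • p.2) ∈ B := hk
    have h1 : (k * p.1 * k⁻¹) • k • p.2 = k • p.2 := (hBprop _ hk').1
    have h2 : k * p.1 * k⁻¹ ≠ 1 := (hBprop _ hk').2
    constructor
    · rw [smul_smul] at h1
      have h4 : k * p.1 * k⁻¹ * k = k * p.1 := by group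
      rw [h4, mul_smul] at h1
      exact MulAction.injective k h1
    · intro h
      apply h2
      rw [h]
      group
  have key : ∀ (m g' : G) (q : G × X),
      ((m * g') * q.1 * (m * g')⁻¹, (m * g') • q.2)
        = (m * (g' * q.1 * g'⁻¹) * m⁻¹, m • g' • q.2) := by
    intro m g' q
    rw [smul_smul]
    rw [Prod.mk.injEq]
    exact ⟨by group, rfl⟩
  have hΩinv : ∀ (g : G) (p : G × X), p ∈ Ω ↔ (g * p.1 * g⁻¹, g • p.2) ∈ Ω := by
    intro g p
    simp only [hΩdef, Set.mem_iUnion, Set.mem_preimage]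
    constructor
    · rintro ⟨k, hk⟩
      refine ⟨k * g⁻¹, ?_⟩
      rw [← key]
      rw [inv_mul_cancel_right]
      exact hk
    · rintro ⟨k, hk⟩
      refine ⟨k * g, ?_⟩
      rw [← key] at hk
      exact hk
  have hΩsubA : Ω ⊆ Γ.conjClass A := by
    intro p hp
    obtain ⟨k, hk⟩ := Set.mem_iUnion.mp hp
    have hmem : (k * p.1 * k⁻¹, k • p.2) ∈ A := hk.1
    have hfix : (k * p.1 * k⁻¹) • (k • p.2) = k • p.2 := (hBprop _ hk).1
    refine ⟨(k⁻¹, k • p.2), (k * p.1 * k⁻¹, k • p.2), hmem, ?_, ?_⟩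
    · rw [hs, ht]
      exact Prod.ext rfl hfix.symm
    · rw [DiscreteBorelGroupoid.conj, hmul, hinv]
      simp only [hmul]
      rw [Prod.mk.injEq]
      constructor
      · group
      · rw [inv_smul_smul]
  -- measure-theoretic facts
  set F : X → Set G := fun y => {g : G | (g, y) ∈ Ω} with hFdef
  have hmono : Γ.muS (μ.map fun x => ((1 : G), x)) Ω
      ≤ Γ.muS (μ.map fun x => ((1 : G), x)) (Γ.conjClass A) := by
    refine lintegral_mono fun x => ?_
    exact ENat.toENNReal_le.mpr (Set.encard_mono (Set.inter_subset_inter_left _ hΩsubA))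
  have hInt : ∫⁻ y, ((F y).encard : ℝ≥0∞) ∂μ ≠ ⊤ := by
    rw [← muS_eq_aux Γ hs μ Ω hΩmeas]
    exact (lt_of_le_of_lt hmono hAfin).ne
  have hfin : ∀ᵐ y ∂μ, (F y).Finite := by
    refine (ae_lt_top (aux_encard_meas hΩmeas) hInt).mono fun y hy => ?_
    have hy' : ((F y).encard : ℝ≥0∞) < ⊤ := hy
    rw [← Set.encard_ne_top_iff]
    intro htop
    rw [htop, ENat.toENNReal_top] at hy'
    exact lt_irrefl _ hy'
  have hBne : μ {y | ∃ g : G, (g, y) ∈ B} ≠ 0 := by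
    intro h0
    apply hB0
    rw [muS_eq_aux Γ hs μ B hBmeas]
    have hzero : ∀ᵐ y ∂μ, (({g : G | (g, y) ∈ B}).encard : ℝ≥0∞) = 0 := by
      rw [ae_iff]
      refine measure_mono_null ?_ h0
      intro y hy
      simp only [Set.mem_setOf_eq] at hy ⊢
      by_contra h
      push_neg at h
      apply hy
      have : {g : G | (g, y) ∈ B} = ∅ := by
        rw [Set.eq_empty_iff_forall_notMem]
        intro g hg
        exact h g hg
      rw [this, Set.encard_empty]
      simp
    rw [lintegral_congr_ae hzero, lintegral_zero]
  have hgood : μ {y | (F y).Nonempty ∧ (F y).Finite} ≠ 0 := by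
    intro h0
    apply hBne
    have h1 : μ {y | ¬ (F y).Finite} = 0 := by
      rw [← ae_iff] at *
      exact hfin
    have hsub : {y | ∃ g : G, (g, y) ∈ B}
        ⊆ {y | (F y).Nonempty ∧ (F y).Finite} ∪ {y | ¬ (F y).Finite} := by
      rintro y ⟨g, hg⟩
      by_cases hf : (F y).Finite
      · exact Or.inl ⟨⟨g, hBsub hg⟩, hf⟩
      · exact Or.inr hf
    refine le_antisymm ?_ zero_le
    calc μ {y | ∃ g : G, (g, y) ∈ B}
        ≤ μ ({y | (F y).Nonempty ∧ (F y).Finite} ∪ {y | ¬ (F y).Finite}) := measure_mono hsub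
      _ ≤ μ {y | (F y).Nonempty ∧ (F y).Finite} + μ {y | ¬ (F y).Finite} := measure_union_le _ _
      _ = 0 := by rw [h0, h1, add_zero]
  -- find the finite set C
  have hexC : ∃ C : {C : Finset G // C.Nonempty}, μ {y | F y = ↑↑C} ≠ 0 := by
    by_contra hall
    push_neg at hall
    apply hgood
    have hsub : {y | (F y).Nonempty ∧ (F y).Finite}
        ⊆ ⋃ C : {C : Finset G // C.Nonempty}, {y | F y = ↑↑C} := by
      rintro y ⟨hne, hfy⟩
      refine Set.mem_iUnion.mpr ⟨⟨hfy.toFinset, ?_⟩, ?_⟩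
      · rw [← Set.Finite.toFinset_nonempty hfy] at hne
        exact hne
      · simp only [Set.mem_setOf_eq, Set.Finite.coe_toFinset]
    exact measure_mono_null hsub (measure_iUnion_null fun C => hall C)
  obtain ⟨⟨C, hCne⟩, hY0⟩ := hexC
  set Y : Set X := {y | F y = ↑C} with hYdef
  -- measurability of level sets of F
  have hDm : ∀ D : Set G, MeasurableSet {y | F y = D} := by
    intro D
    have h1 : {y | F y = D} = ⋂ g : G, {y | ((g, y) ∈ Ω ↔ g ∈ D)} := by
      ext y
      simp only [Set.mem_setOf_eq, Set.mem_iInter, Set.ext_iff]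
      rfl
    rw [h1]
    refine MeasurableSet.iInter fun g => ?_
    by_cases hg : g ∈ D
    · have h2 : {y | ((g, y) ∈ Ω ↔ g ∈ D)} = (fun y => (g, y)) ⁻¹' Ω := by
        ext y; simp [hg]
      rw [h2]; exact hΩmeas.preimage measurable_prodMk_left
    · have h2 : {y | ((g, y) ∈ Ω ↔ g ∈ D)} = ((fun y => (g, y)) ⁻¹' Ω)ᶜ := by
        ext y; simp [hg]
      rw [h2]; exact (hΩmeas.preimage measurable_prodMk_left).compl
  -- conjugation formula for F
  have hFconj : ∀ (k : G) (y : X), F (k • y) = (fun c => k * c * k⁻¹) '' (F y) := by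
    intro k y
    ext g
    simp only [hFdef, Set.mem_setOf_eq, Set.mem_image]
    constructor
    · intro hg
      have h1 := (hΩinv k⁻¹ (g, k • y)).mp hg
      simp only [inv_inv, inv_smul_smul] at h1
      exact ⟨k⁻¹ * g * k, h1, by group⟩
    · rintro ⟨a, ha, rfl⟩
      exact (hΩinv k (a, y)).mp ha
  -- basic conjugation algebra
  have himgc : ∀ (a b : G) (S : Set G), (fun c => a * c * a⁻¹) '' ((fun c => b * c * b⁻¹) '' S)
      = (fun c => (a * b) * c * (a * b)⁻¹) '' S := by
    intro a b S
    rw [← Set.image_comp]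
    refine Set.image_congr fun c _ => ?_
    simp only [Function.comp_apply]
    group
  have himg1 : ∀ S : Set G, (fun c => (1 : G) * c * 1⁻¹) '' S = S := by
    intro S
    have : (fun c : G => (1 : G) * c * 1⁻¹) = id := by funext c; simp
    rw [this, Set.image_id]
  have hinjc : ∀ a : G, Function.Injective (fun c : G => a * c * a⁻¹) := by
    intro a c d h
    simp only at h
    exact mul_left_cancel (mul_right_cancel h)
  have hYmem : ∀ y, y ∈ Y ↔ F y = ↑C := fun y => Iff.rfl
  have hYiff : ∀ h : G, (fun c => h * c * h⁻¹) '' (↑C : Set G) = ↑C →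
      ∀ y, (y ∈ Y ↔ h • y ∈ Y) := by
    intro h hH y
    simp only [hYdef, Set.mem_setOf_eq, hFconj]
    constructor
    · intro hy; rw [hy, hH]
    · intro hy
      have h1 : (fun c => h * c * h⁻¹) '' (F y) = (fun c => h * c * h⁻¹) '' (↑C : Set G) := by
        rw [hy, hH]
      exact Set.image_injective.mpr (hinjc h) h1
  have hHinv : ∀ h : G, (fun c => h * c * h⁻¹) '' (↑C : Set G) = ↑C →
      (fun c => h⁻¹ * c * h⁻¹⁻¹) '' (↑C : Set G) = ↑C := by
    intro h hH
    conv_lhs => rw [← hH]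
    rw [himgc, inv_mul_cancel, himg1]
  have himgY : ∀ h : G, (fun c => h * c * h⁻¹) '' (↑C : Set G) = ↑C →
      (fun x => h • x) '' Y = Y := by
    intro h hH
    ext x
    constructor
    · rintro ⟨y, hy, rfl⟩
      exact (hYiff h hH y).mp hy
    · intro hx
      exact ⟨h⁻¹ • x, (hYiff h⁻¹ (hHinv h hH) x).mp hx, smul_inv_smul h x⟩
  -- Y is nonempty
  have hYne : Y.Nonempty := by
    rw [Set.nonempty_iff_ne_empty]
    intro h
    apply hY0
    rw [h, measure_empty]
  obtain ⟨y0, hy0⟩ := hYne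
  have hy0' : F y0 = ↑C := hy0
  have h1C : (1 : G) ∉ C := by
    intro h1
    have hmem : (1 : G) ∈ F y0 := by rw [hy0']; exact_mod_cast h1
    exact (hΩprop _ hmem).2 rfl
  have hCfix : ∀ h ∈ C, ∀ y ∈ Y, h • y = y := by
    intro h hh y hy
    have hmem : (h, y) ∈ Ω := by
      have : h ∈ F y := by rw [(hYmem y).mp hy]; exact_mod_cast hh
      exact this
    exact (hΩprop _ hmem).1
  have hCH : ∀ h ∈ C, (fun c => h * c * h⁻¹) '' (↑C : Set G) = ↑C := by
    intro h hh
    have h1 : h • y0 = y0 := hCfix h hh y0 hy0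
    have h2 := hFconj h y0
    rw [h1, hy0'] at h2
    exact h2.symm
  -- the union of translates
  have hEeq : (⋃ g : G, (fun x => g • x) '' Y)
      = ⋃ k : G, {x | F x = (fun c => k * c * k⁻¹) '' (↑C : Set G)} := by
    ext x
    simp only [Set.mem_iUnion, Set.mem_image, Set.mem_setOf_eq]
    constructor
    · rintro ⟨g, y, hy, rfl⟩
      exact ⟨g, by rw [hFconj, (hYmem y).mp hy]⟩
    · rintro ⟨k, hk⟩
      refine ⟨k, k⁻¹ • x, ?_, smul_inv_smul k x⟩
      rw [hYmem, hFconj, hk, himgc, inv_mul_cancel, himg1]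
  have hEinv : ∀ g : G, (fun x => g • x) ⁻¹' (⋃ g : G, (fun x => g • x) '' Y)
      = ⋃ g : G, (fun x => g • x) '' Y := by
    intro g
    rw [hEeq]
    ext x
    simp only [Set.mem_preimage, Set.mem_iUnion, Set.mem_setOf_eq]
    constructor
    · rintro ⟨k, hk⟩
      refine ⟨g⁻¹ * k, ?_⟩
      rw [hFconj] at hk
      have h2 := congrArg (Set.image fun c => g⁻¹ * c * g⁻¹⁻¹) hk
      rw [himgc, himgc, inv_mul_cancel, himg1] at h2
      exact h2
    · rintro ⟨k, hk⟩
      refine ⟨g * k, ?_⟩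
      rw [hFconj, hk, himgc]
  have hEcompl : μ (⋃ g : G, (fun x => g • x) '' Y)ᶜ = 0 := by
    rcases herg (⋃ g : G, (fun x => g • x) '' Y)
        (by rw [hEeq]; exact MeasurableSet.iUnion fun k => hDm _) hEinv with h | h
    · exfalso
      apply hY0
      refine measure_mono_null ?_ h
      intro y hy
      exact Set.mem_iUnion.mpr ⟨1, ⟨y, hy, one_smul G y⟩⟩
    · exact h
  -- assemble
  refine ⟨C, hCne, h1C, Y, hDm (↑C : Set G), hY0, ?_, ?_, hEcompl, ?_⟩
  · intro h hH
    rw [himgY h hH, symmDiff_self]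
    simp
  · intro g₁ g₂ hne
    have hne' : (((fun x => g₁ • x) '' Y) ∩ ((fun x => g₂ • x) '' Y)).Nonempty := by
      rw [Set.nonempty_iff_ne_empty]
      intro h
      rw [h, measure_empty] at hne
      exact hne rfl
    obtain ⟨x, ⟨y₁, hy₁, hxy₁⟩, ⟨y₂, hy₂, hxy₂⟩⟩ := hne'
    have e1 : F x = (fun c => g₁ * c * g₁⁻¹) '' (↑C : Set G) := by
      rw [← hxy₁, hFconj, (hYmem y₁).mp hy₁]
    have e2 : F x = (fun c => g₂ * c * g₂⁻¹) '' (↑C : Set G) := by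
      rw [← hxy₂, hFconj, (hYmem y₂).mp hy₂]
    have h2 := congrArg (Set.image fun c => g₁⁻¹ * c * g₁⁻¹⁻¹) (e1.symm.trans e2)
    rw [himgc, himgc, inv_mul_cancel, himg1] at h2
    exact h2.symm
  · intro h hh
    refine ⟨hCH h hh, ?_, ?_⟩
    · have hempty : {y ∈ Y | h • y ≠ y} = ∅ := by
        rw [Set.eq_empty_iff_forall_notMem]
        rintro y ⟨hy, hne⟩
        exact hne (hCfix h hh y hy)
      rw [hempty, measure_empty]
    · refine Set.Finite.subset C.finite_toSet ?_
      rintro k ⟨g, hg, rfl⟩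
      rw [Set.mem_setOf_eq] at hg
      rw [← hg]
      exact ⟨h, by exact_mod_cast hh, rfl⟩
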